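/- Let m ≥ 2, 0 ≤ β < 1, let k(z) = z + ∑_{n≥2} k_n z^n be bi-univalent with k₂ ≠ 0, k₃ ≠ 0 and 2k₃ − k₂² ≠ 0, and let f(z) = z + ∑_{n≥2} a_n z^n belong to the class S_m^k(β), i.e., BV^k(m; 0, β). Then |a₂| ≤ min{ √( m(1−β)/|2k₃ − k₂²| ) , m(1−β)/|k₂| }. -/

import Mathlib

open MeasureTheory Set Metric Complex
open scoped NNReal ENNReal Topology

noncomputable section

/-- The `n`-th MacLaurin coefficient of `f`, i.e. `f⁽ⁿ⁾(0)/n!`. -/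
def mc (f : ℂ → ℂ) (n : ℕ) : ℂ := iteratedDeriv n f 0 / (n.factorial : ℂ)

/-- The open unit disk in `ℂ`. -/
def unitDisk : Set ℂ := Metric.ball (0 : ℂ) 1

/-- The kernel `(1 - z e^{it})/(1 + z e^{it})`. -/
def pmKernel (z : ℂ) (t : ℝ) : ℂ :=
  (1 - z * Complex.exp (t * Complex.I)) / (1 + z * Complex.exp (t * Complex.I))

/-- The class `P_m` of functions with bounded boundary rotation: `p` is analytic on the unit
disk, `p 0 = 1`, and `p` is represented against a finite signed Borel measure
`μ = μp - μn` on `[0, 2π]` with `μ([0,2π]) = 1` and total variation `‖μ‖ ≤ m/2`. -/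
def MemPm (m : ℝ) (p : ℂ → ℂ) : Prop :=
  AnalyticOnNhd ℂ p unitDisk ∧ p 0 = 1 ∧
  ∃ μp μn : Measure ℝ, IsFiniteMeasure μp ∧ IsFiniteMeasure μn ∧
    (μp (Set.Icc 0 (2 * Real.pi))).toReal - (μn (Set.Icc 0 (2 * Real.pi))).toReal = 1 ∧
    (μp (Set.Icc 0 (2 * Real.pi))).toReal + (μn (Set.Icc 0 (2 * Real.pi))).toReal ≤ m / 2 ∧
    ∀ z ∈ unitDisk, p z =
      (∫ t in Set.Icc 0 (2 * Real.pi), pmKernel z t ∂μp) -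
      (∫ t in Set.Icc 0 (2 * Real.pi), pmKernel z t ∂μn)

lemma mem_unitDisk {z : ℂ} : z ∈ unitDisk ↔ ‖z‖ < 1 := by
  simp [unitDisk, Metric.mem_ball, Complex.dist_eq]

lemma zero_mem_unitDisk : (0 : ℂ) ∈ unitDisk := by simp [mem_unitDisk]

lemma differentiableAt_id' {x : ℂ} : DifferentiableAt ℂ (fun w : ℂ => w) x :=
  differentiableAt_id

lemma isOpen_unitDisk : IsOpen unitDisk := Metric.isOpen_ball

lemma mc_congr {f g : ℂ → ℂ} (h : f =ᶠ[nhds 0] g) (n : ℕ) : mc f n = mc g n := by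
  unfold mc; rw [h.iteratedDeriv_eq n]

lemma hasFPS_tsum (c : ℕ → ℂ) (hc : ∀ z ∈ unitDisk, Summable fun n => c n * z ^ n) :
    HasFPowerSeriesOnBall (fun z => ∑' n, c n * z ^ n)
      (FormalMultilinearSeries.ofScalars ℂ c) 0 1 := by
  constructor
  · -- 1 ≤ radius
    refine ENNReal.le_of_forall_nnreal_lt ?_
    intro r hr
    have hrlt : (r : ℝ) < 1 := by exact_mod_cast hr
    have hz : ((r : ℝ) : ℂ) ∈ unitDisk := by
      rw [mem_unitDisk]; simpa [_root_.abs_of_nonneg r.2] using hrlt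
    have hs := (hc _ hz).norm
    refine FormalMultilinearSeries.le_radius_of_summable _ ?_
    apply hs.congr
    intro n
    rw [norm_mul, norm_pow, FormalMultilinearSeries.ofScalars_norm]
    simp [Complex.norm_real, Real.norm_eq_abs, _root_.abs_of_nonneg r.2]
  · exact one_pos
  · intro y hy
    have hyD : y ∈ unitDisk := by
      rw [mem_unitDisk]
      simpa [edist_eq_enorm_sub, enorm_eq_nnnorm, ← NNReal.coe_lt_coe] using hy
    have he : (fun n => (FormalMultilinearSeries.ofScalars ℂ c n) fun _ => y)
        = fun n => c n * y ^ n := by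
      funext n
      rw [FormalMultilinearSeries.ofScalars_apply_eq, smul_eq_mul]
    rw [zero_add, he]
    exact (hc y hyD).hasSum


lemma mc_tsum (c : ℕ → ℂ) (hc : ∀ z ∈ unitDisk, Summable fun n => c n * z ^ n) (n : ℕ) :
    mc (fun z => ∑' n, c n * z ^ n) n = c n := by
  have h := hasFPS_tsum c hc
  have h2 := h.factorial_smul (1 : ℂ) n
  rw [FormalMultilinearSeries.ofScalars_apply_eq, one_pow, smul_eq_mul, mul_one,
    ← iteratedDeriv_eq_iteratedFDeriv] at h2
  unfold mc
  rw [← h2, nsmul_eq_mul, mul_comm, mul_div_assoc, div_self (by exact_mod_cast n.factorial_ne_zero), mul_one]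

lemma analyticOnNhd_tsum (c : ℕ → ℂ) (hc : ∀ z ∈ unitDisk, Summable fun n => c n * z ^ n) :
    AnalyticOnNhd ℂ (fun z => ∑' n, c n * z ^ n) unitDisk := by
  intro z hz
  have h := hasFPS_tsum c hc
  apply h.analyticAt_of_mem
  rw [EMetric.mem_ball, edist_eq_enorm_sub, sub_zero, enorm_eq_nnnorm]
  rw [mem_unitDisk] at hz
  have h1 : ‖z‖₊ < (1 : ℝ≥0) := by
    rw [← NNReal.coe_lt_coe]; simpa using hz
  calc (‖z‖₊ : ℝ≥0∞) < ((1:ℝ≥0) : ℝ≥0∞) := ENNReal.coe_lt_coe.mpr h1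
  _ = 1 := by simp

/-- coefficients of the kernel expansion -/
def dcoef (n : ℕ) : ℂ := if n = 0 then 1 else 2 * (-1) ^ n

lemma dcoef_abs_le (n : ℕ) : ‖dcoef n‖ ≤ 2 := by
  unfold dcoef
  split_ifs <;> simp [norm_mul, norm_pow]

lemma kernel_hasSum {w : ℂ} (hw : ‖w‖ < 1) :
    HasSum (fun n : ℕ => dcoef n * w ^ n) ((1 - w) / (1 + w)) := by
  have hw1 : (1 : ℂ) + w ≠ 0 := by
    intro h
    have : w = -1 := by linear_combination h
    rw [this] at hw; simp at hw
  have hgeo : HasSum (fun n : ℕ => (-w) ^ n) (1 + w)⁻¹ := by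
    have := hasSum_geometric_of_norm_lt_one (ξ := -w) (by simpa using hw)
    simpa [sub_neg_eq_add] using this
  have h2 := hgeo.mul_left 2
  have h3 := h2.sub (hasSum_ite_eq (0 : ℕ) (1 : ℂ))
  have he : (fun n : ℕ => 2 * (-w) ^ n - if n = 0 then (1:ℂ) else 0)
      = fun n => dcoef n * w ^ n := by
    funext n
    unfold dcoef
    split_ifs with h
    · subst h; norm_num
    · rw [neg_pow]; ring
  rw [he] at h3
  convert h3 using 1
  · rfl
  field_simp
  ring

lemma abs_exp_mul_I (t : ℝ) : ‖Complex.exp (t * Complex.I)‖ = 1 :=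
  Complex.norm_exp_ofReal_mul_I t

lemma continuous_eker (n : ℕ) : Continuous (fun t : ℝ => Complex.exp (t * Complex.I) ^ n) :=
  (Complex.continuous_exp.comp (by continuity)).pow n

lemma norm_eker (n : ℕ) (t : ℝ) : ‖Complex.exp (t * Complex.I) ^ n‖ = 1 := by
  rw [norm_pow, abs_exp_mul_I, one_pow]

lemma integral_kernel_eq (μ : Measure ℝ) [IsFiniteMeasure μ] {z : ℂ}
    (hz : ‖z‖ < 1) :
    ∫ t in Set.Icc 0 (2 * Real.pi), pmKernel z t ∂μ =
      ∑' n : ℕ, (dcoef n * z ^ n) *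
        ∫ t in Set.Icc 0 (2 * Real.pi), Complex.exp (t * Complex.I) ^ n ∂μ := by
  set μ' := μ.restrict (Set.Icc 0 (2 * Real.pi)) with hμ'
  haveI : IsFiniteMeasure μ' := by
    rw [hμ']; infer_instance
  set f : ℕ → ℝ → ℂ := fun n t => (dcoef n * z ^ n) * Complex.exp (t * Complex.I) ^ n with hf
  have hnorm : ∀ n t, ‖f n t‖ = ‖dcoef n * z ^ n‖ := by
    intro n t
    rw [hf]
    rw [norm_mul, norm_pow, abs_exp_mul_I, one_pow, mul_one]
  have hint : ∀ n, Integrable (f n) μ' := by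
    intro n
    refine Integrable.mono' (integrable_const (‖dcoef n * z ^ n‖)) ?_ ?_
    · exact (((continuous_const).mul (continuous_eker n))).aestronglyMeasurable
    · filter_upwards with t
      rw [hnorm]
  have hptw : ∀ t : ℝ, pmKernel z t = ∑' n, f n t := by
    intro t
    have hw : ‖z * Complex.exp (t * Complex.I)‖ < 1 := by
      rw [norm_mul, abs_exp_mul_I, mul_one]; exact hz
    have := (kernel_hasSum hw).tsum_eq
    rw [pmKernel, ← this]
    congr 1
    funext n
    rw [hf, mul_pow]
    ring
  have hsum : Summable fun n => ∫ t, ‖f n t‖ ∂μ' := by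
    have he : (fun n => ∫ t, ‖f n t‖ ∂μ') =
        fun n => ‖dcoef n * z ^ n‖ * (μ' Set.univ).toReal := by
      funext n
      simp_rw [hnorm]
      rw [integral_const, smul_eq_mul, mul_comm]
      rfl
    rw [he]
    have hS : Summable (fun n => ‖dcoef n * z ^ n‖) :=
      Summable.of_nonneg_of_le (fun n => norm_nonneg _)
        (fun n => by
          rw [norm_mul, norm_pow]
          exact mul_le_mul_of_nonneg_right (dcoef_abs_le n)
            (pow_nonneg (norm_nonneg z) n))
        ((summable_geometric_of_lt_one (norm_nonneg z) hz).mul_left 2)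
    exact hS.mul_right _
  have hswap := integral_tsum_of_summable_integral_norm hint hsum
  calc ∫ t, pmKernel z t ∂μ' = ∫ t, ∑' n, f n t ∂μ' := by
        apply integral_congr_ae
        filter_upwards with t
        exact hptw t
  _ = ∑' n, ∫ t, f n t ∂μ' := hswap.symm
  _ = ∑' n : ℕ, (dcoef n * z ^ n) *
        ∫ t in Set.Icc 0 (2 * Real.pi), Complex.exp (t * Complex.I) ^ n ∂μ := by
      congr 1
      funext n
      rw [hf, ← hμ']
      exact integral_const_mul _ _

lemma abs_integral_eker_le (μ : Measure ℝ) [IsFiniteMeasure μ] (n : ℕ) :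
    ‖∫ t in Set.Icc 0 (2 * Real.pi), Complex.exp (t * Complex.I) ^ n ∂μ‖ ≤
      (μ (Set.Icc 0 (2 * Real.pi))).toReal := by
  haveI : IsFiniteMeasure (μ.restrict (Set.Icc 0 (2 * Real.pi))) := by infer_instance
  have h := norm_integral_le_of_norm_le_const
    (μ := μ.restrict (Set.Icc 0 (2 * Real.pi)))
    (f := fun t : ℝ => Complex.exp (t * Complex.I) ^ n) (C := 1)
    (by filter_upwards with t using le_of_eq (norm_eker n t))
  rw [one_mul, measureReal_restrict_apply_univ] at h
  simpa [Measure.real] using h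

lemma MemPm.abs_mc_le {m : ℝ} {q : ℂ → ℂ} (h : MemPm m q) (n : ℕ) :
    ‖mc q n‖ ≤ m := by
  obtain ⟨hA, hq0, μp, μn, hfp, hfn, hdiff, hsum, hrep⟩ := h
  set Ip : ℕ → ℂ := fun n => ∫ t in Set.Icc 0 (2 * Real.pi), Complex.exp (t * Complex.I) ^ n ∂μp
    with hIp
  set In : ℕ → ℂ := fun n => ∫ t in Set.Icc 0 (2 * Real.pi), Complex.exp (t * Complex.I) ^ n ∂μn
    with hIn
  set c : ℕ → ℂ := fun n => dcoef n * (Ip n - In n) with hc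
  have hcb : ∀ j, ‖c j‖ ≤ m := by
    intro j
    rw [hc]
    calc ‖dcoef j * (Ip j - In j)‖
        = ‖dcoef j‖ * ‖Ip j - In j‖ := norm_mul _ _
      _ ≤ 2 * ((μp (Set.Icc 0 (2 * Real.pi))).toReal + (μn (Set.Icc 0 (2 * Real.pi))).toReal) := by
          apply mul_le_mul (dcoef_abs_le j) ?_ (norm_nonneg _) (by norm_num)
          calc ‖Ip j - In j‖ ≤ ‖Ip j‖ + ‖In j‖ :=
                by simpa using norm_sub_le (Ip j) (In j)
            _ ≤ _ := add_le_add (abs_integral_eker_le μp j) (abs_integral_eker_le μn j)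
      _ ≤ 2 * (m / 2) := by linarith
      _ = m := by ring
  have hm0 : 0 ≤ m := by
    have h1 : (0:ℝ) ≤ (μp (Set.Icc 0 (2 * Real.pi))).toReal + (μn (Set.Icc 0 (2 * Real.pi))).toReal :=
      add_nonneg ENNReal.toReal_nonneg ENNReal.toReal_nonneg
    linarith
  have hsummable : ∀ z ∈ unitDisk, Summable fun j => c j * z ^ j := by
    intro z hz
    rw [mem_unitDisk] at hz
    apply Summable.of_norm
    apply Summable.of_nonneg_of_le (fun j => norm_nonneg _)
      (fun j => ?_) ((summable_geometric_of_lt_one (norm_nonneg z) hz).mul_left m)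
    rw [norm_mul, norm_pow]
    exact mul_le_mul_of_nonneg_right (hcb j) (pow_nonneg (norm_nonneg z) j)
  have hkey : ∀ z ∈ unitDisk, q z = ∑' j, c j * z ^ j := by
    intro z hz
    have hz' := mem_unitDisk.mp hz
    rw [hrep z hz, integral_kernel_eq μp hz', integral_kernel_eq μn hz']
    have s1 : Summable fun j => dcoef j * z ^ j * Ip j := by
      apply Summable.of_norm
      apply Summable.of_nonneg_of_le (fun j => norm_nonneg _) (fun j => ?_)
        (((summable_geometric_of_lt_one (norm_nonneg z) hz').mul_left 2).mul_right
          ((μp (Set.Icc 0 (2 * Real.pi))).toReal))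
      rw [norm_mul, norm_mul, norm_pow]
      apply mul_le_mul
      · exact mul_le_mul_of_nonneg_right (dcoef_abs_le j) (pow_nonneg (norm_nonneg z) j)
      · exact abs_integral_eker_le μp j
      · exact norm_nonneg _
      · positivity
    have s2 : Summable fun j => dcoef j * z ^ j * In j := by
      apply Summable.of_norm
      apply Summable.of_nonneg_of_le (fun j => norm_nonneg _) (fun j => ?_)
        (((summable_geometric_of_lt_one (norm_nonneg z) hz').mul_left 2).mul_right
          ((μn (Set.Icc 0 (2 * Real.pi))).toReal))
      rw [norm_mul, norm_mul, norm_pow]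
      apply mul_le_mul
      · exact mul_le_mul_of_nonneg_right (dcoef_abs_le j) (pow_nonneg (norm_nonneg z) j)
      · exact abs_integral_eker_le μn j
      · exact norm_nonneg _
      · positivity
    rw [← Summable.tsum_sub s1 s2]
    congr 1
    funext j
    rw [hc]
    ring
  have hev : q =ᶠ[nhds 0] fun z => ∑' j, c j * z ^ j := by
    filter_upwards [isOpen_unitDisk.mem_nhds zero_mem_unitDisk] with z hz
    exact hkey z hz
  rw [mc_congr hev n, mc_tsum c hsummable n]
  exact hcb n

lemma mc_one (f : ℂ → ℂ) : mc f 1 = deriv f 0 := by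
  simp [mc, iteratedDeriv_one]

lemma mc_two (f : ℂ → ℂ) : mc f 2 = deriv (deriv f) 0 / 2 := by
  have : iteratedDeriv 2 f = deriv (deriv f) := by
    rw [show (2:ℕ) = 1 + 1 from rfl, iteratedDeriv_succ, iteratedDeriv_one]
  rw [mc, this]; norm_num [Nat.factorial]

lemma mc_three (f : ℂ → ℂ) : mc f 3 = deriv (deriv (deriv f)) 0 / 6 := by
  have : iteratedDeriv 3 f = deriv (deriv (deriv f)) := by
    rw [show (3:ℕ) = 2 + 1 from rfl, iteratedDeriv_succ,
      show (2:ℕ) = 1 + 1 from rfl, iteratedDeriv_succ, iteratedDeriv_one]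
  rw [mc, this]; norm_num [Nat.factorial]

lemma derivCongrOn {U : Set ℂ} (hUo : IsOpen U) (A B : ℂ → ℂ)
    (h : ∀ z ∈ U, A z = B z) {z : ℂ} (hz : z ∈ U) : deriv A z = deriv B z := by
  have hev : A =ᶠ[nhds z] B := by
    filter_upwards [hUo.mem_nhds hz] with w hw using h w hw
  exact hev.deriv_eq

lemma coeff_rel {F Q : ℂ → ℂ} {U : Set ℂ} (hUo : IsOpen U) (hU0 : (0:ℂ) ∈ U)
    (hF : AnalyticOnNhd ℂ F U) (hQ : AnalyticOnNhd ℂ Q U)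
    (heq : ∀ z ∈ U, z * deriv F z = Q z * F z)
    (hF0 : F 0 = 0) (hF1 : deriv F 0 = 1) :
    mc Q 1 = mc F 2 ∧ mc Q 2 = 2 * mc F 3 - (mc F 2) ^ 2 := by
  have hdF : AnalyticOnNhd ℂ (deriv F) U := hF.deriv
  have hddF : AnalyticOnNhd ℂ (deriv (deriv F)) U := hdF.deriv
  have hdddF : AnalyticOnNhd ℂ (deriv (deriv (deriv F))) U := hddF.deriv
  have hdQ : AnalyticOnNhd ℂ (deriv Q) U := hQ.deriv
  have hddQ : AnalyticOnNhd ℂ (deriv (deriv Q)) U := hdQ.deriv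
  -- first derivative of the identity
  have e1 : ∀ z ∈ U, deriv F z + z * deriv (deriv F) z
      = deriv Q z * F z + Q z * deriv F z := by
    intro z hz
    have h := derivCongrOn hUo (fun w => w * deriv F w) (fun w => Q w * F w) heq hz
    have hl : deriv (fun w => w * deriv F w) z
        = deriv F z + z * deriv (deriv F) z := by
      rw [deriv_fun_mul differentiableAt_id' ((hdF z hz).differentiableAt)]
      simp
    have hr : deriv (fun w => Q w * F w) z = deriv Q z * F z + Q z * deriv F z :=
      deriv_fun_mul (hQ z hz).differentiableAt (hF z hz).differentiableAt
    rw [← hl, ← hr]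
    exact h
  -- second derivative
  have e2 : ∀ z ∈ U, 2 * deriv (deriv F) z + z * deriv (deriv (deriv F)) z
      = deriv (deriv Q) z * F z + 2 * deriv Q z * deriv F z
        + Q z * deriv (deriv F) z := by
    intro z hz
    have h := derivCongrOn hUo (fun w => deriv F w + w * deriv (deriv F) w) (fun w => deriv Q w * F w + Q w * deriv F w) e1 hz
    have hl : deriv (fun w => deriv F w + w * deriv (deriv F) w) z
        = 2 * deriv (deriv F) z + z * deriv (deriv (deriv F)) z := by
      rw [deriv_fun_add ((hdF z hz).differentiableAt)
        (differentiableAt_id'.fun_mul ((hddF z hz).differentiableAt)),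
        deriv_fun_mul differentiableAt_id' ((hddF z hz).differentiableAt)]
      simp; ring
    have hr : deriv (fun w => deriv Q w * F w + Q w * deriv F w) z
        = deriv (deriv Q) z * F z + 2 * deriv Q z * deriv F z
          + Q z * deriv (deriv F) z := by
      rw [deriv_fun_add (((hdQ z hz).differentiableAt).fun_mul ((hF z hz).differentiableAt))
        (((hQ z hz).differentiableAt).fun_mul ((hdF z hz).differentiableAt)),
        deriv_fun_mul ((hdQ z hz).differentiableAt) ((hF z hz).differentiableAt),
        deriv_fun_mul ((hQ z hz).differentiableAt) ((hdF z hz).differentiableAt)]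
      ring
    rw [← hl, ← hr]
    exact h
  -- third derivative, at 0 only
  have e3 : 3 * deriv (deriv (deriv F)) 0
      = deriv (deriv (deriv Q)) 0 * F 0 + 3 * deriv (deriv Q) 0 * deriv F 0
        + 3 * deriv Q 0 * deriv (deriv F) 0 + Q 0 * deriv (deriv (deriv F)) 0 := by
    have h := derivCongrOn hUo (fun w => 2 * deriv (deriv F) w + w * deriv (deriv (deriv F)) w) (fun w => deriv (deriv Q) w * F w + 2 * deriv Q w * deriv F w + Q w * deriv (deriv F) w) e2 hU0
    have hl : deriv (fun w => 2 * deriv (deriv F) w + w * deriv (deriv (deriv F)) w) 0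
        = 3 * deriv (deriv (deriv F)) 0 := by
      rw [deriv_fun_add ((hddF 0 hU0).differentiableAt.const_mul 2)
        (differentiableAt_id'.fun_mul ((hdddF 0 hU0).differentiableAt)),
        deriv_const_mul 2 ((hddF 0 hU0).differentiableAt),
        deriv_fun_mul differentiableAt_id' ((hdddF 0 hU0).differentiableAt)]
      simp; ring
    have hr : deriv (fun w => deriv (deriv Q) w * F w + 2 * deriv Q w * deriv F w
          + Q w * deriv (deriv F) w) 0
        = deriv (deriv (deriv Q)) 0 * F 0 + 3 * deriv (deriv Q) 0 * deriv F 0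
          + 3 * deriv Q 0 * deriv (deriv F) 0 + Q 0 * deriv (deriv (deriv F)) 0 := by
      have d1 : DifferentiableAt ℂ (fun w => deriv (deriv Q) w * F w) 0 :=
        ((hddQ 0 hU0).differentiableAt).mul ((hF 0 hU0).differentiableAt)
      have d2 : DifferentiableAt ℂ (fun w => 2 * deriv Q w * deriv F w) 0 :=
        (((hdQ 0 hU0).differentiableAt.const_mul 2)).mul ((hdF 0 hU0).differentiableAt)
      have d3 : DifferentiableAt ℂ (fun w => Q w * deriv (deriv F) w) 0 :=
        ((hQ 0 hU0).differentiableAt).mul ((hddF 0 hU0).differentiableAt)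
      rw [deriv_fun_add (d1.fun_add d2) d3, deriv_fun_add d1 d2,
        deriv_fun_mul ((hddQ 0 hU0).differentiableAt) ((hF 0 hU0).differentiableAt),
        deriv_fun_mul (((hdQ 0 hU0).differentiableAt).const_mul 2) ((hdF 0 hU0).differentiableAt),
        deriv_const_mul 2 ((hdQ 0 hU0).differentiableAt),
        deriv_fun_mul ((hQ 0 hU0).differentiableAt) ((hddF 0 hU0).differentiableAt)]
      ring
    rw [← hl, ← hr]
    exact h
  have v1 : Q 0 = 1 := by
    have := e1 0 hU0
    rw [hF0, hF1] at this
    simpa using this.symm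
  have v2 : deriv (deriv F) 0 = 2 * deriv Q 0 := by
    have := e2 0 hU0
    rw [hF0, hF1, v1] at this
    simpa using by linear_combination this
  have v3 : 2 * deriv (deriv (deriv F)) 0
      = 3 * deriv (deriv Q) 0 + 3 * deriv Q 0 * deriv (deriv F) 0 := by
    have := e3
    rw [hF0, hF1, v1] at this
    linear_combination this
  constructor
  · rw [mc_one, mc_two]
    linear_combination (-(1:ℂ)/2) * v2
  · rw [mc_two, mc_three, mc_two]
    linear_combination (-(1:ℂ)/6) * v3 + (deriv (deriv F) 0 / 4) * v2

lemma inv_mc {f g : ℂ → ℂ} (hf : AnalyticOnNhd ℂ f unitDisk)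
    (hg : AnalyticOnNhd ℂ g unitDisk)
    (hf0 : f 0 = 0) (hf1 : deriv f 0 = 1) (hg0 : g 0 = 0)
    (hfg : ∀ w : ℂ, ‖w‖ < 1 / 4 → f (g w) = w) :
    mc g 2 = - mc f 2 ∧ mc g 3 = 2 * (mc f 2) ^ 2 - mc f 3 := by
  -- find a small open set around 0 where everything is fine
  have hgc : ContinuousAt g 0 := (hg 0 zero_mem_unitDisk).differentiableAt.continuousAt
  have hpre : g ⁻¹' unitDisk ∈ nhds (0:ℂ) := by
    apply hgc.preimage_mem_nhds
    apply isOpen_unitDisk.mem_nhds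
    rw [hg0]; exact zero_mem_unitDisk
  obtain ⟨W0, hW0sub, hW0o, hW0mem⟩ := _root_.mem_nhds_iff.mp hpre
  set W : Set ℂ := W0 ∩ Metric.ball (0:ℂ) (1/4) ∩ unitDisk with hW
  have hWo : IsOpen W := (hW0o.inter Metric.isOpen_ball).inter isOpen_unitDisk
  have hW0 : (0:ℂ) ∈ W := by
    refine ⟨⟨hW0mem, ?_⟩, zero_mem_unitDisk⟩
    simp [Metric.mem_ball]
  have hWg : ∀ z ∈ W, g z ∈ unitDisk := fun z hz => hW0sub hz.1.1
  have hWq : ∀ z ∈ W, ‖z‖ < 1 / 4 := by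
    intro z hz
    have := hz.1.2
    simpa [Metric.mem_ball, Complex.dist_eq] using this
  have hcomp : ∀ z ∈ W, f (g z) = z := fun z hz => hfg z (hWq z hz)
  -- analyticity of derivatives
  have hdf : AnalyticOnNhd ℂ (deriv f) unitDisk := hf.deriv
  have hddf : AnalyticOnNhd ℂ (deriv (deriv f)) unitDisk := hdf.deriv
  have hdddf : AnalyticOnNhd ℂ (deriv (deriv (deriv f))) unitDisk := hddf.deriv
  have hdg : AnalyticOnNhd ℂ (deriv g) unitDisk := hg.deriv
  have hddg : AnalyticOnNhd ℂ (deriv (deriv g)) unitDisk := hdg.deriv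
  have hWsub : W ⊆ unitDisk := fun z hz => hz.2
  -- first derivative
  have e1 : ∀ z ∈ W, deriv f (g z) * deriv g z = 1 := by
    intro z hz
    have h := derivCongrOn hWo (fun w => f (g w)) (fun w => w) hcomp hz
    have hl : deriv (fun w => f (g w)) z = deriv f (g z) * deriv g z := by
      rw [show (fun w => f (g w)) = f ∘ g from rfl]
      exact deriv_comp z ((hf _ (hWg z hz)).differentiableAt)
        ((hg _ (hWsub hz)).differentiableAt)
    rw [← hl, h, deriv_id'']
  -- second derivative
  have e2 : ∀ z ∈ W, deriv (deriv f) (g z) * (deriv g z * deriv g z)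
      + deriv f (g z) * deriv (deriv g) z = 0 := by
    intro z hz
    have h := derivCongrOn hWo (fun w => deriv f (g w) * deriv g w) (fun _ => 1) e1 hz
    have hc1 : deriv (fun w => deriv f (g w)) z = deriv (deriv f) (g z) * deriv g z := by
      rw [show (fun w => deriv f (g w)) = deriv f ∘ g from rfl]
      exact deriv_comp z ((hdf _ (hWg z hz)).differentiableAt)
        ((hg _ (hWsub hz)).differentiableAt)
    have hdfg : DifferentiableAt ℂ (fun w => deriv f (g w)) z :=
      ((hdf _ (hWg z hz)).differentiableAt).comp z ((hg _ (hWsub hz)).differentiableAt)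
    have hl : deriv (fun w => deriv f (g w) * deriv g w) z
        = deriv (deriv f) (g z) * (deriv g z * deriv g z)
          + deriv f (g z) * deriv (deriv g) z := by
      rw [deriv_fun_mul hdfg ((hdg _ (hWsub hz)).differentiableAt), hc1]
      ring
    rw [← hl, h, deriv_const]
  -- third derivative at 0
  have hWg0 : g 0 ∈ unitDisk := hWg 0 hW0
  have v0 : deriv g 0 = 1 := by
    have := e1 0 hW0
    rw [hg0, hf1, one_mul] at this
    exact this
  have e3 : deriv (deriv (deriv f)) (g 0) * deriv g 0 * (deriv g 0 * deriv g 0)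
      + deriv (deriv f) (g 0) * (deriv (deriv g) 0 * deriv g 0 + deriv g 0 * deriv (deriv g) 0)
      + (deriv (deriv f) (g 0) * deriv g 0) * deriv (deriv g) 0
      + deriv f (g 0) * deriv (deriv (deriv g)) 0 = 0 := by
    have h := derivCongrOn hWo
      (fun w => deriv (deriv f) (g w) * (deriv g w * deriv g w)
        + deriv f (g w) * deriv (deriv g) w) (fun _ => 0) e2 hW0
    have hddfg : DifferentiableAt ℂ (fun w => deriv (deriv f) (g w)) 0 :=
      ((hddf _ hWg0).differentiableAt).comp 0 ((hg _ (hWsub hW0)).differentiableAt)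
    have hdfg : DifferentiableAt ℂ (fun w => deriv f (g w)) 0 :=
      ((hdf _ hWg0).differentiableAt).comp 0 ((hg _ (hWsub hW0)).differentiableAt)
    have hdgd : DifferentiableAt ℂ (deriv g) 0 := (hdg _ (hWsub hW0)).differentiableAt
    have hddgd : DifferentiableAt ℂ (deriv (deriv g)) 0 := (hddg _ (hWsub hW0)).differentiableAt
    have hc1 : deriv (fun w => deriv (deriv f) (g w)) 0
        = deriv (deriv (deriv f)) (g 0) * deriv g 0 := by
      rw [show (fun w => deriv (deriv f) (g w)) = deriv (deriv f) ∘ g from rfl]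
      exact deriv_comp 0 ((hddf _ hWg0).differentiableAt)
        ((hg _ (hWsub hW0)).differentiableAt)
    have hc2 : deriv (fun w => deriv f (g w)) 0
        = deriv (deriv f) (g 0) * deriv g 0 := by
      rw [show (fun w => deriv f (g w)) = deriv f ∘ g from rfl]
      exact deriv_comp 0 ((hdf _ hWg0).differentiableAt)
        ((hg _ (hWsub hW0)).differentiableAt)
    have hl : deriv (fun w => deriv (deriv f) (g w) * (deriv g w * deriv g w)
          + deriv f (g w) * deriv (deriv g) w) 0
        = deriv (deriv (deriv f)) (g 0) * deriv g 0 * (deriv g 0 * deriv g 0)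
          + deriv (deriv f) (g 0) * (deriv (deriv g) 0 * deriv g 0
            + deriv g 0 * deriv (deriv g) 0)
          + (deriv (deriv f) (g 0) * deriv g 0) * deriv (deriv g) 0
          + deriv f (g 0) * deriv (deriv (deriv g)) 0 := by
      rw [deriv_fun_add (hddfg.fun_mul (hdgd.fun_mul hdgd)) (hdfg.fun_mul hddgd),
        deriv_fun_mul hddfg (hdgd.fun_mul hdgd), deriv_fun_mul hdgd hdgd,
        deriv_fun_mul hdfg hddgd, hc1, hc2]
      ring
    rw [← hl, h, deriv_const]
  have v2 : deriv (deriv f) 0 + deriv (deriv g) 0 = 0 := by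
    have := e2 0 hW0
    rw [hg0, hf1, v0] at this
    linear_combination this
  have v3 : deriv (deriv (deriv f)) 0 + 3 * deriv (deriv f) 0 * deriv (deriv g) 0
      + deriv (deriv (deriv g)) 0 = 0 := by
    have := e3
    rw [hg0, hf1, v0] at this
    linear_combination this
  constructor
  · rw [mc_two, mc_two]
    linear_combination v2 / 2
  · rw [mc_three, mc_two, mc_three]
    have hsub : deriv (deriv g) 0 = - deriv (deriv f) 0 := by linear_combination v2
    rw [hsub] at v3
    linear_combination v3 / 6

/-- `p ∈ P_m(β)` iff `p = β + (1 - β) q` on the unit disk for some `q ∈ P_m`. -/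
def MemPmBeta (m β : ℝ) (p : ℂ → ℂ) : Prop :=
  ∃ q : ℂ → ℂ, MemPm m q ∧ ∀ z ∈ unitDisk, p z = (β : ℂ) + (1 - (β : ℂ)) * q z

/-- `f` and `g` form a bi-univalent pair: `f` is analytic and injective on the unit disk with
`f 0 = 0`, `f' 0 = 1`, and `g` is the univalent analytic continuation of `f⁻¹` to the unit
disk: `g` is analytic and injective on the unit disk, `g 0 = 0`, and `f (g w) = w` for
`|w| < 1/4`. -/
def BiUnivalentPair (f g : ℂ → ℂ) : Prop :=
  AnalyticOnNhd ℂ f unitDisk ∧ f 0 = 0 ∧ deriv f 0 = 1 ∧ Set.InjOn f unitDisk ∧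
  AnalyticOnNhd ℂ g unitDisk ∧ Set.InjOn g unitDisk ∧ g 0 = 0 ∧
  ∀ w : ℂ, ‖w‖ < 1 / 4 → f (g w) = w

/-- MacLaurin coefficients of the Hadamard convolution `f ∗ k`. -/
def hadCoeff (f k : ℂ → ℂ) (n : ℕ) : ℂ :=
  if n = 0 then 0 else if n = 1 then 1 else mc f n * mc k n

/-- The Hadamard convolution `F(z) = (f ∗ k)(z) = z + ∑_{n≥2} a_n k_n z^n`. -/
def hadFun (f k : ℂ → ℂ) (z : ℂ) : ℂ := ∑' n : ℕ, hadCoeff f k n * z ^ n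

/-- The expression `z F'(z)/F(z)`, extended by `1` at the origin. -/
def starOp (F : ℂ → ℂ) (z : ℂ) : ℂ := if z = 0 then 1 else z * deriv F z / F z

/-- `f ∈ S_m^k(β) = BV^k(m; 0, β)`: `f` is bi-univalent with inverse `g`, the convolutions
`F = f ∗ k` and `G = g ∗ k` converge on the unit disk, do not vanish on the punctured disk,
and both `z F'/F` and `w G'/G` belong to `P_m(β)`. -/
def MemS (m β : ℝ) (k f g : ℂ → ℂ) : Prop :=
  BiUnivalentPair f g ∧
  (∀ z ∈ unitDisk, Summable fun n : ℕ => hadCoeff f k n * z ^ n) ∧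
  (∀ w ∈ unitDisk, Summable fun n : ℕ => hadCoeff g k n * w ^ n) ∧
  (∀ z ∈ unitDisk, z ≠ 0 → hadFun f k z ≠ 0) ∧
  (∀ w ∈ unitDisk, w ≠ 0 → hadFun g k w ≠ 0) ∧
  MemPmBeta m β (starOp (hadFun f k)) ∧ MemPmBeta m β (starOp (hadFun g k))

lemma hadFun_mc {f k : ℂ → ℂ}
    (hs : ∀ z ∈ unitDisk, Summable fun n : ℕ => hadCoeff f k n * z ^ n) (n : ℕ) :
    mc (hadFun f k) n = hadCoeff f k n := by
  have : hadFun f k = fun z => ∑' n : ℕ, hadCoeff f k n * z ^ n := rfl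
  rw [this, mc_tsum _ hs]

lemma mc_zero_eq (F : ℂ → ℂ) : mc F 0 = F 0 := by simp [mc]

lemma hadFun_zero {f k : ℂ → ℂ}
    (hs : ∀ z ∈ unitDisk, Summable fun n : ℕ => hadCoeff f k n * z ^ n) :
    hadFun f k 0 = 0 := by
  have := hadFun_mc hs 0
  rw [mc_zero_eq] at this
  rw [this, hadCoeff]; simp

lemma hadFun_deriv_zero {f k : ℂ → ℂ}
    (hs : ∀ z ∈ unitDisk, Summable fun n : ℕ => hadCoeff f k n * z ^ n) :
    deriv (hadFun f k) 0 = 1 := by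
  have := hadFun_mc hs 1
  rw [mc_one] at this
  rw [this, hadCoeff]; simp

lemma hadFun_analytic {f k : ℂ → ℂ}
    (hs : ∀ z ∈ unitDisk, Summable fun n : ℕ => hadCoeff f k n * z ^ n) :
    AnalyticOnNhd ℂ (hadFun f k) unitDisk := by
  have : hadFun f k = fun z => ∑' n : ℕ, hadCoeff f k n * z ^ n := rfl
  rw [this]
  exact analyticOnNhd_tsum _ hs

lemma mc_const_add_mul (b c : ℂ) {q : ℂ → ℂ} (hq : AnalyticOnNhd ℂ q unitDisk) :
    mc (fun z => b + c * q z) 1 = c * mc q 1 ∧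
    mc (fun z => b + c * q z) 2 = c * mc q 2 := by
  have hd : ∀ z ∈ unitDisk, deriv (fun w => b + c * q w) z = c * deriv q z := by
    intro z hz
    rw [deriv_const_add, deriv_const_mul c ((hq z hz).differentiableAt)]
  constructor
  · rw [mc_one, mc_one, hd 0 zero_mem_unitDisk]
  · rw [mc_two, mc_two]
    have h2 : deriv (deriv (fun w => b + c * q w)) 0 = c * deriv (deriv q) 0 := by
      have := derivCongrOn isOpen_unitDisk (deriv (fun w => b + c * q w))
        (fun z => c * deriv q z) hd zero_mem_unitDisk
      rw [this, deriv_const_mul c ((hq.deriv 0 zero_mem_unitDisk).differentiableAt)]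
    rw [h2]
    ring

/-- The estimates obtained from one side (either `f∗k` or `g∗k`). -/
lemma side_estimates {m β : ℝ} {F : ℂ → ℂ}
    (hFa : AnalyticOnNhd ℂ F unitDisk) (hF0 : F 0 = 0) (hF1 : deriv F 0 = 1)
    (hnz : ∀ z ∈ unitDisk, z ≠ 0 → F z ≠ 0)
    (hp : MemPmBeta m β (starOp F)) :
    (∃ u : ℂ, ‖u‖ ≤ m ∧ (1 - (β:ℂ)) * u = mc F 2) ∧
    (∃ v : ℂ, ‖v‖ ≤ m ∧ (1 - (β:ℂ)) * v = 2 * mc F 3 - (mc F 2) ^ 2) := by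
  obtain ⟨q, hqm, heq⟩ := hp
  set Q : ℂ → ℂ := fun z => (β : ℂ) + (1 - (β:ℂ)) * q z with hQ
  have hqa : AnalyticOnNhd ℂ q unitDisk := hqm.1
  have hQa : AnalyticOnNhd ℂ Q unitDisk := by
    rw [hQ]
    exact fun z hz => (analyticAt_const).add (analyticAt_const.mul (hqa z hz))
  have hkey : ∀ z ∈ unitDisk, z * deriv F z = Q z * F z := by
    intro z hz
    by_cases h0 : z = 0
    · rw [h0, hF0, zero_mul, mul_zero]
    · have h1 := heq z hz
      rw [starOp, if_neg h0] at h1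
      have h2 := hnz z hz h0
      field_simp at h1
      rw [h1, hQ]
      exact mul_comm _ _
  obtain ⟨r1, r2⟩ := coeff_rel isOpen_unitDisk zero_mem_unitDisk hFa hQa hkey hF0 hF1
  obtain ⟨m1, m2⟩ := mc_const_add_mul (β : ℂ) (1 - (β:ℂ)) hqa
  constructor
  · exact ⟨mc q 1, hqm.abs_mc_le 1, by rw [← m1, r1]⟩
  · exact ⟨mc q 2, hqm.abs_mc_le 2, by rw [← m2, r2]⟩

/-- Corollary 2.3, bound for `|a₂|` in the class `S_m^k(β) = BV^k(m; 0, β)`. -/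
theorem S_a2_bound (m β : ℝ) (hm : 2 ≤ m) (hβ0 : 0 ≤ β) (hβ1 : β < 1)
    (k kinv f g : ℂ → ℂ) (hk : BiUnivalentPair k kinv)
    (hk2 : mc k 2 ≠ 0) (hk3 : mc k 3 ≠ 0)
    (hD : 2 * mc k 3 - mc k 2 ^ 2 ≠ 0)
    (hf : MemS m β k f g) :
    ‖mc f 2‖ ≤
      min (Real.sqrt (m * (1 - β) / ‖2 * mc k 3 - mc k 2 ^ 2‖))
        (m * (1 - β) / ‖mc k 2‖) := by

  obtain ⟨hbi, hsf, hsg, hnzf, hnzg, hpf, hpg⟩ := hf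
  obtain ⟨hfa, hf0, hf1, _, hga, _, hg0, hfg⟩ := hbi
  -- coefficients of the convolutions
  have hF2 : mc (hadFun f k) 2 = mc f 2 * mc k 2 := by
    rw [hadFun_mc hsf 2, hadCoeff]; norm_num
  have hF3 : mc (hadFun f k) 3 = mc f 3 * mc k 3 := by
    rw [hadFun_mc hsf 3, hadCoeff]; norm_num
  have hG2 : mc (hadFun g k) 2 = mc g 2 * mc k 2 := by
    rw [hadFun_mc hsg 2, hadCoeff]; norm_num
  have hG3 : mc (hadFun g k) 3 = mc g 3 * mc k 3 := by
    rw [hadFun_mc hsg 3, hadCoeff]; norm_num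
  -- inverse function coefficients
  obtain ⟨hb2, hb3⟩ := inv_mc hfa hga hf0 hf1 hg0 hfg
  -- side estimates
  obtain ⟨⟨u1, hu1, hu1e⟩, ⟨v1, hv1, hv1e⟩⟩ := side_estimates
    (hadFun_analytic hsf) (hadFun_zero hsf) (hadFun_deriv_zero hsf) hnzf hpf
  obtain ⟨⟨u2, hu2, hu2e⟩, ⟨v2, hv2, hv2e⟩⟩ := side_estimates
    (hadFun_analytic hsg) (hadFun_zero hsg) (hadFun_deriv_zero hsg) hnzg hpg
  rw [hF2] at hu1e
  rw [hF3, hF2] at hv1e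
  rw [hG3, hG2, hb2, hb3] at hv2e
  -- basic positivity facts
  have hc0 : (0:ℝ) < 1 - β := by linarith
  have hm0 : (0:ℝ) ≤ m := by linarith
  have habs_c : ‖1 - (β:ℂ)‖ = 1 - β := by
    rw [show (1 - (β:ℂ)) = ((1 - β : ℝ) : ℂ) by push_cast; ring, Complex.norm_real, Real.norm_eq_abs,
      abs_of_pos hc0]
  -- Bound 1 : |a2| * |k2| ≤ m * (1-β)
  have hbd1 : ‖mc f 2‖ * ‖mc k 2‖ ≤ m * (1 - β) := by
    have h1 : ‖mc f 2‖ * ‖mc k 2‖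
        = (1 - β) * ‖u1‖ := by
      rw [← norm_mul, ← hu1e, norm_mul, habs_c]
    rw [h1]
    calc (1 - β) * ‖u1‖ ≤ (1 - β) * m :=
          mul_le_mul_of_nonneg_left hu1 (le_of_lt hc0)
    _ = m * (1 - β) := by ring
  -- Bound 2 : 2 * |a2|^2 * |2k3 - k2^2| ≤ 2 * m * (1-β)
  have hsum2 : (1 - (β:ℂ)) * (v1 + v2) = 2 * (mc f 2) ^ 2 * (2 * mc k 3 - mc k 2 ^ 2) := by
    rw [mul_add, hv1e, hv2e]
    ring
  have hbd2 : 2 * ‖mc f 2‖ ^ 2 * ‖2 * mc k 3 - mc k 2 ^ 2‖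
      ≤ 2 * (m * (1 - β)) := by
    have h1 : 2 * ‖mc f 2‖ ^ 2 * ‖2 * mc k 3 - mc k 2 ^ 2‖
        = (1 - β) * ‖v1 + v2‖ := by
      rw [← habs_c, ← norm_mul, hsum2, norm_mul, norm_mul, norm_pow]
      norm_num
    rw [h1]
    have h2 : ‖v1 + v2‖ ≤ 2 * m := by
      calc ‖v1 + v2‖ ≤ ‖v1‖ + ‖v2‖ := by
            simpa using norm_add_le v1 v2
      _ ≤ m + m := add_le_add hv1 hv2
      _ = 2 * m := by ring
    calc (1 - β) * ‖v1 + v2‖ ≤ (1 - β) * (2 * m) :=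
          mul_le_mul_of_nonneg_left h2 (le_of_lt hc0)
    _ = 2 * (m * (1 - β)) := by ring
  -- conclude
  apply le_min
  · -- sqrt bound
    rw [Real.le_sqrt (norm_nonneg _)]
    rw [le_div_iff₀ (norm_pos_iff.mpr hD)]
    · linarith
    · exact div_nonneg (mul_nonneg hm0 hc0.le) (norm_nonneg _)
  · rw [le_div_iff₀ (norm_pos_iff.mpr hk2)]
    exact hbd1
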